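/- arXiv:2402.13713 — 4 statements merged into one kernel-verified Lean document; each statement's English description precedes it below -/
import Mathlib

section
/- Let K be a number field and let 𝒢 = ⟨f_1, …, f_s⟩ be a semigroup (under composition) generated by rational maps f_i of degree d_i ≥ 2 defined over K, with d := max_i d_i. Suppose each sequence 𝐟 = (f_{i_k})_{k≥1} obtained from 𝒢 has an associated canonical height ĥ_𝐟 satisfying |ĥ_𝐟(x) − h(x)| ≤ 2c(𝒢) for all x and ĥ_{T(𝐟)}(f_{i_1}(x)) = d_{i_1}·ĥ_𝐟(x), where c(𝒢) = max_i sup_x |(1/d_i)h(f_i(x)) − h(x)| and T is the shift. If β ∈ K̄ is not preperiodic for 𝒢 (meaning the forward orbit of β under every sequence obtained from 𝒢 is infinite), then there exists a constant c₀ > 0 depending only on 𝒢, K and [K(β):K] such that ĥ_𝐟(β) ≥ c₀ for every sequence 𝐟 obtained from 𝒢. -/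
/-- The absolute logarithmic Weil height of an algebraic number (Mahler measure of the
primitive integer minimal polynomial, divided by the degree). -/
noncomputable def weilHeight (α : AlgebraicClosure ℚ) : ℝ :=
  (Real.log (((minpoly ℚ α).support.lcm fun i => ((minpoly ℚ α).coeff i).den : ℕ) : ℝ) +
      (((minpoly ℚ α).aroots ℂ).map fun z => Real.log (max 1 ‖z‖)).sum) /
    ((minpoly ℚ α).natDegree : ℝ)

open Classical in
/-- The Weil height of the point `[x : y] ∈ ℙ¹(ℚ̄)`. -/
noncomputable def pairHeight (x y : AlgebraicClosure ℚ) : ℝ :=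
  if y = 0 then 0 else weilHeight (x / y)

/-- `ℙ¹(ℚ̄)`. -/
abbrev P1 := Projectivization (AlgebraicClosure ℚ) (Fin 2 → AlgebraicClosure ℚ)

/-- The Weil height on `ℙ¹(ℚ̄)`. -/
noncomputable def projHeight (x : P1) : ℝ := pairHeight (x.rep 0) (x.rep 1)

open Classical in
/-- The self-map of `ℙ¹(ℚ̄)` induced by the pair of homogeneous forms `(G, H)`
(for coprime homogeneous forms the pair of evaluations never vanishes on `ℙ¹`). -/
noncomputable def applyF (G H : MvPolynomial (Fin 2) (AlgebraicClosure ℚ)) (x : P1) : P1 :=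
  if h : (![MvPolynomial.eval x.rep G, MvPolynomial.eval x.rep H] :
      Fin 2 → AlgebraicClosure ℚ) ≠ 0 then
    Projectivization.mk (AlgebraicClosure ℚ) _ h
  else x

/-- The forward orbit of `x` under the sequence of maps chosen by `seq` from the semigroup
generated by the rational maps `f_i = [G i : H i]`. -/
noncomputable def orbitPt {s : ℕ} (G H : Fin s → MvPolynomial (Fin 2) (AlgebraicClosure ℚ))
    (seq : ℕ → Fin s) (x : P1) : ℕ → P1
  | 0 => x
  | n + 1 => applyF (G (seq n)) (H (seq n)) (orbitPt G H seq x n)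

namespace CHLB


lemma mabs_sum_le (t : Multiset ℂ) : ‖t.sum‖ ≤ (t.map (fun z => ‖z‖)).sum := by
  induction t using Multiset.induction_on with
  | empty => simp
  | cons a s ih =>
    simp only [Multiset.sum_cons, Multiset.map_cons]
    exact le_trans (norm_add_le _ _) (by linarith)

lemma mlog_sum (t : Multiset ℂ) :
    (t.map fun z => Real.log (max 1 (‖z‖))).sum
      = Real.log ((t.map fun z => max 1 (‖z‖)).prod) := by
  induction t using Multiset.induction_on with
  | empty => simp
  | cons a s ih =>
    simp only [Multiset.map_cons, Multiset.sum_cons, Multiset.prod_cons]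
    rw [ih, Real.log_mul (by positivity)]
    have : (1:ℝ) ≤ (Multiset.map (fun z => max 1 (‖z‖)) s).prod :=
      Multiset.one_le_prod (by simp)
    linarith

lemma one_le_maxprod (t : Multiset ℂ) :
    (1:ℝ) ≤ (t.map fun z => max 1 (‖z‖)).prod :=
  Multiset.one_le_prod (by simp)

lemma prod_abs_le_max (t : Multiset ℂ) :
    (t.map (fun z => ‖z‖)).prod ≤ (t.map fun z => max 1 (‖z‖)).prod := by
  induction t using Multiset.induction_on with
  | empty => simp
  | cons a s ih =>
    simp only [Multiset.map_cons, Multiset.prod_cons]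
    exact mul_le_mul (le_max_right _ _) ih
      (Multiset.prod_nonneg (by simp [norm_nonneg]))
      (le_trans zero_le_one (le_max_left _ _))

lemma prod_abs_le_maxprod (t s : Multiset ℂ) (hts : t ≤ s) :
    (t.map (fun z => ‖z‖)).prod ≤ (s.map fun z => max 1 (‖z‖)).prod := by
  obtain ⟨u, rfl⟩ := Multiset.le_iff_exists_add.mp hts
  rw [Multiset.map_add, Multiset.prod_add]
  calc (t.map (fun z => ‖z‖)).prod
      ≤ (t.map fun z => max 1 (‖z‖)).prod := prod_abs_le_max t
    _ ≤ _ := le_mul_of_one_le_right (le_trans zero_le_one (one_le_maxprod t)) (one_le_maxprod u)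

lemma esymm_bound (s : Multiset ℂ) (k : ℕ) :
    ‖s.esymm k‖ ≤ (s.card.choose k : ℝ) * (s.map fun z => max 1 (‖z‖)).prod := by
  unfold Multiset.esymm
  calc ‖((s.powersetCard k).map Multiset.prod).sum‖
      ≤ (((s.powersetCard k).map Multiset.prod).map (fun z => ‖z‖)).sum := mabs_sum_le _
    _ ≤ _ := by
        rw [Multiset.map_map]
        have hb : ∀ x ∈ (s.powersetCard k).map ((fun z : ℂ => ‖z‖) ∘ Multiset.prod),
            x ≤ (s.map fun z => max 1 (‖z‖)).prod := by
          intro x hx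
          obtain ⟨t, ht, rfl⟩ := Multiset.mem_map.mp hx
          have := Multiset.mem_powersetCard.mp ht
          calc ((fun z : ℂ => ‖z‖) ∘ Multiset.prod) t = (t.map (fun z => ‖z‖)).prod := by
                exact map_multiset_prod (normHom : ℂ →*₀ ℝ) t
            _ ≤ _ := prod_abs_le_maxprod t s this.1
        have := Multiset.sum_le_card_nsmul _ _ hb
        simpa [Multiset.card_powersetCard, nsmul_eq_mul] using this

lemma rat_finite (R : ℝ) : {q : ℚ | |(q:ℝ)| ≤ R ∧ (q.den : ℝ) ≤ R}.Finite := by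
  obtain ⟨n, hn⟩ := exists_nat_ge R
  apply Set.Finite.subset (Set.Finite.image (fun p : ℤ × ℕ => (p.1 : ℚ) / (p.2 : ℚ))
    (Set.Finite.prod (Set.finite_Icc (-(n^2 : ℤ)) (n^2)) (Set.finite_Iic (n : ℕ))))
  rintro q ⟨h1, h2⟩
  refine ⟨(q.num, q.den), ⟨?_, ?_⟩, ?_⟩
  · have hden : (0:ℝ) < (q.den : ℝ) := by exact_mod_cast q.pos
    have hnum : |(q.num : ℝ)| ≤ R * R := by
      have : (q.num : ℝ) = (q : ℝ) * (q.den : ℝ) := by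
        rw [Rat.cast_def]
        field_simp
      rw [this, abs_mul, abs_of_pos hden]
      have h0R : (0:ℝ) ≤ R := le_trans (abs_nonneg _) h1
      exact mul_le_mul h1 h2 (le_of_lt hden) h0R
    have : |(q.num : ℝ)| ≤ ((n^2 : ℤ) : ℝ) := by
      push_cast
      calc |(q.num:ℝ)| ≤ R * R := hnum
        _ ≤ (n:ℝ) * n := by
            have h0R : (0:ℝ) ≤ R := le_trans (abs_nonneg _) h1
            exact mul_le_mul hn hn h0R (by positivity)
        _ = (n:ℝ)^2 := by ring
    have habs : |q.num| ≤ (n^2 : ℤ) := by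
      have h' : |((q.num : ℤ) : ℝ)| ≤ ((n^2 : ℤ) : ℝ) := this
      rw [← Int.cast_abs] at h'
      exact_mod_cast h'
    simpa [Set.mem_Icc] using abs_le.mp habs
  · simp only [Set.mem_Iic]
    exact_mod_cast le_trans h2 hn
  · simp [Rat.num_div_den]

open Polynomial in
lemma coeff_key (R : ℝ) (D : ℕ) (B : ℝ) (hRdef : R = 2 ^ D * Real.exp (D * max B 0))
    (α : AlgebraicClosure ℚ) (hD : (minpoly ℚ α).natDegree ≤ D) (hB : weilHeight α ≤ B) :
    ∀ k, |((((minpoly ℚ α).coeff k) : ℚ) : ℝ)| ≤ R ∧ (((minpoly ℚ α).coeff k).den : ℝ) ≤ R := by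
  intro k
  have hint : IsIntegral ℚ α := ((AlgebraicClosure.isAlgebraic ℚ).isAlgebraic α).isIntegral
  set p := minpoly ℚ α with hpdef
  have hp0 : p ≠ 0 := minpoly.ne_zero hint
  have hmonic : p.Monic := minpoly.monic hint
  have hn1 : 0 < p.natDegree := minpoly.natDegree_pos hint
  set n := p.natDegree with hndef
  have hcard : Multiset.card (p.aroots ℂ) = n := by
    have h1 : Multiset.card (p.map (algebraMap ℚ ℂ)).roots = (p.map (algebraMap ℚ ℂ)).natDegree :=
      IsAlgClosed.card_roots_eq_natDegree
    rw [aroots_def, h1, Polynomial.natDegree_map]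
  set ℓ : ℕ := p.support.lcm fun i => (p.coeff i).den with hℓdef
  have hℓ0 : ℓ ≠ 0 := by
    intro h
    rw [hℓdef] at h
    obtain ⟨i, hi, h0⟩ := (Finset.lcm_eq_zero_iff).mp h
    exact (p.coeff i).den_nz h0
  have hℓ1 : (1:ℝ) ≤ (ℓ:ℝ) := by exact_mod_cast Nat.one_le_iff_ne_zero.mpr hℓ0
  set M : ℝ := ((p.aroots ℂ).map fun z => max 1 (‖z‖)).prod with hMdef
  have hM1 : (1:ℝ) ≤ M := one_le_maxprod _
  have hlog : Real.log ((ℓ:ℝ) * M) ≤ (n:ℝ) * max B 0 := by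
    have hwh := hB
    unfold weilHeight at hwh
    rw [← hpdef, ← hℓdef, mlog_sum, ← hMdef, ← hndef] at hwh
    have hn : (0:ℝ) < (n:ℝ) := by exact_mod_cast hn1
    rw [div_le_iff₀ hn] at hwh
    rw [Real.log_mul (by positivity) (by positivity)]
    calc Real.log (ℓ:ℝ) + Real.log M ≤ B * n := hwh
      _ ≤ max B 0 * n := mul_le_mul_of_nonneg_right (le_max_left _ _) (le_of_lt hn)
      _ = (n:ℝ) * max B 0 := mul_comm _ _
  have hEM : (ℓ:ℝ) * M ≤ Real.exp ((D:ℝ) * max B 0) := by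
    have h2 : Real.log ((ℓ:ℝ) * M) ≤ (D:ℝ) * max B 0 :=
      le_trans hlog (mul_le_mul_of_nonneg_right (by exact_mod_cast hD) (le_max_right _ _))
    calc (ℓ:ℝ) * M = Real.exp (Real.log ((ℓ:ℝ) * M)) := (Real.exp_log (by positivity)).symm
      _ ≤ _ := Real.exp_le_exp.mpr h2
  have hone_le_2D : (1:ℝ) ≤ 2 ^ D := one_le_pow₀ (by norm_num)
  have hER : Real.exp ((D:ℝ) * max B 0) ≤ R := by
    rw [hRdef]
    exact le_mul_of_one_le_left (le_of_lt (Real.exp_pos _)) hone_le_2D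
  have hℓR : (ℓ:ℝ) ≤ R := by
    calc (ℓ:ℝ) ≤ (ℓ:ℝ) * M := le_mul_of_one_le_right (by linarith) hM1
      _ ≤ _ := le_trans hEM hER
  have hME : M ≤ Real.exp ((D:ℝ) * max B 0) := by
    calc M ≤ (ℓ:ℝ) * M := le_mul_of_one_le_left (by linarith) hℓ1
      _ ≤ _ := hEM
  refine ⟨?_, ?_⟩
  · by_cases hk : k ≤ n
    · set pm := p.map (algebraMap ℚ ℂ) with hpm
      have hpmdeg : pm.natDegree = n := Polynomial.natDegree_map _
      have hcard' : Multiset.card pm.roots = pm.natDegree := by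
        rw [hpmdeg]; exact hcard
      have hco := Polynomial.coeff_eq_esymm_roots_of_card hcard' (k := k) (by rw [hpmdeg]; exact hk)
      have hlead : pm.leadingCoeff = 1 := (hmonic.map _)
      have habs : ‖pm.coeff k‖ ≤ (n.choose (n - k) : ℝ) * M := by
        rw [hco, hlead, hpmdeg]
        rw [norm_mul, norm_mul]
        simp only [norm_one, norm_pow, norm_neg, one_mul, one_pow]
        have := esymm_bound pm.roots (n - k)
        rw [hcard'] at this
        rw [hpmdeg] at this
        exact this
      have hcoeff : ‖pm.coeff k‖ = |((p.coeff k : ℚ) : ℝ)| := by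
        rw [hpm, Polynomial.coeff_map]
        have : (algebraMap ℚ ℂ) (p.coeff k) = (((p.coeff k : ℚ) : ℝ) : ℂ) := by
          push_cast; norm_cast
        rw [this, Complex.norm_real, Real.norm_eq_abs]
      have hchoose : (n.choose (n - k) : ℝ) ≤ 2 ^ D := by
        have h1 : n.choose (n - k) ≤ 2 ^ n := by
          calc n.choose (n - k) ≤ ∑ i ∈ Finset.range (n + 1), n.choose i :=
              Finset.single_le_sum (fun i _ => Nat.zero_le _)
                (Finset.mem_range.mpr (Nat.lt_succ_of_le (Nat.sub_le _ _)))
            _ = 2 ^ n := Nat.sum_range_choose n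
        calc (n.choose (n-k) : ℝ) ≤ (2:ℝ) ^ n := by exact_mod_cast h1
          _ ≤ 2 ^ D := by
            apply pow_le_pow_right₀ (by norm_num) hD
      rw [← hcoeff]
      calc ‖pm.coeff k‖ ≤ (n.choose (n - k) : ℝ) * M := habs
        _ ≤ 2 ^ D * Real.exp ((D:ℝ) * max B 0) := by
            apply mul_le_mul hchoose hME (by linarith) (by positivity)
        _ = R := hRdef.symm
    · have hR1 : (1:ℝ) ≤ R := le_trans hℓ1 hℓR
      push_neg at hk
      have : p.coeff k = 0 := Polynomial.coeff_eq_zero_of_natDegree_lt hk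
      rw [this]; simp; linarith
  · by_cases hk : k ∈ p.support
    · have hdvd : (p.coeff k).den ∣ ℓ := Finset.dvd_lcm hk
      have := Nat.le_of_dvd (Nat.pos_of_ne_zero hℓ0) hdvd
      calc ((p.coeff k).den : ℝ) ≤ (ℓ:ℝ) := by exact_mod_cast this
        _ ≤ R := hℓR
    · have : p.coeff k = 0 := Polynomial.notMem_support_iff.mp hk
      rw [this]
      simpa using le_trans hℓ1 hℓR

open Polynomial in
noncomputable def polyOf (D : ℕ) (f : Fin (D+1) → ℚ) : Polynomial ℚ :=
  ∑ k : Fin (D+1), Polynomial.C (f k) * Polynomial.X ^ (k:ℕ)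

open Polynomial in
lemma northcott (D : ℕ) (B : ℝ) :
    {α : AlgebraicClosure ℚ | (minpoly ℚ α).natDegree ≤ D ∧ weilHeight α ≤ B}.Finite := by
  set R : ℝ := 2 ^ D * Real.exp (D * max B 0) with hRdef
  set Q : Set ℚ := {q : ℚ | |(q:ℝ)| ≤ R ∧ (q.den:ℝ) ≤ R} with hQ
  have hQfin : Q.Finite := rat_finite R
  have hA : {f : Fin (D+1) → ℚ | ∀ k, f k ∈ Q}.Finite := by
    apply (Set.Finite.pi (fun _ : Fin (D+1) => hQfin)).subset
    intro f hf
    simpa [Set.mem_pi] using fun k => hf k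
  have hZ : ∀ f : Fin (D+1) → ℚ, {x : AlgebraicClosure ℚ |
      polyOf D f ≠ 0 ∧ (Polynomial.aeval x) (polyOf D f) = 0}.Finite := by
    intro f
    by_cases h : polyOf D f = 0
    · simp [h]
    · apply Set.Finite.subset (Polynomial.finite_setOf_isRoot
        (p := (polyOf D f).map (algebraMap ℚ (AlgebraicClosure ℚ)))
        ((Polynomial.map_ne_zero_iff (algebraMap ℚ (AlgebraicClosure ℚ)).injective).mpr h))
      intro x hx
      simp only [Set.mem_setOf_eq] at hx ⊢
      rw [Polynomial.IsRoot, Polynomial.eval_map, ← Polynomial.aeval_def]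
      exact hx.2
  apply Set.Finite.subset (Set.Finite.biUnion hA (fun f _ => hZ f))
  intro α hα
  obtain ⟨hD, hB⟩ := hα
  have key := coeff_key R D B hRdef α hD hB
  have hpoly : polyOf D (fun k : Fin (D+1) => (minpoly ℚ α).coeff k) = minpoly ℚ α := by
    conv_rhs => rw [(minpoly ℚ α).as_sum_range' (D+1) (Nat.lt_succ_of_le hD)]
    unfold polyOf
    rw [← Fin.sum_univ_eq_sum_range (fun i => Polynomial.monomial i ((minpoly ℚ α).coeff i)) (D+1)]
    apply Finset.sum_congr rfl
    intro i _
    rw [Polynomial.C_mul_X_pow_eq_monomial]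
  have hmem : (fun k : Fin (D+1) => (minpoly ℚ α).coeff k) ∈
      {f : Fin (D+1) → ℚ | ∀ k, f k ∈ Q} := fun k => key k
  refine Set.mem_biUnion hmem ?_
  have hint : IsIntegral ℚ α := ((AlgebraicClosure.isAlgebraic ℚ).isAlgebraic α).isIntegral
  refine ⟨by rw [hpoly]; exact minpoly.ne_zero hint, by rw [hpoly]; exact minpoly.aeval ℚ α⟩



abbrev Qbar := AlgebraicClosure ℚ

def IsLpt (L : IntermediateField ℚ Qbar) (p : P1) : Prop :=
  ∃ v : Fin 2 → Qbar, (∀ i, v i ∈ L) ∧ ∃ h : v ≠ 0, p = Projectivization.mk Qbar v h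

lemma eval_smul_homog {φ : MvPolynomial (Fin 2) Qbar} {n : ℕ}
    (hφ : φ.IsHomogeneous n) (t : Qbar) (v : Fin 2 → Qbar) :
    MvPolynomial.eval (t • v) φ = t ^ n * MvPolynomial.eval v φ := by
  rw [MvPolynomial.eval_eq', MvPolynomial.eval_eq', Finset.mul_sum]
  apply Finset.sum_congr rfl
  intro dd hdd
  have hw : (Finsupp.weight 1) dd = n := hφ (MvPolynomial.mem_support_iff.mp hdd)
  have hdeg : ∑ i : Fin 2, dd i = n := by
    rw [← hw, show (Finsupp.weight 1 : (Fin 2 →₀ ℕ) →+ ℕ) = Finsupp.weight (fun _ => 1) from rfl,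
      ← Finsupp.degree_eq_weight_one, Finsupp.degree_apply]
    exact (Finset.sum_subset (Finset.subset_univ _)
      (fun i _ hi => Finsupp.notMem_support_iff.mp hi)).symm
  have : ∀ i : Fin 2, (t • v) i ^ dd i = t ^ dd i * v i ^ dd i := by
    intro i; rw [Pi.smul_apply, smul_eq_mul, mul_pow]
  rw [Finset.prod_congr rfl (fun i _ => this i), Finset.prod_mul_distrib,
    Finset.prod_pow_eq_pow_sum, hdeg]
  ring

lemma applyF_isLpt (L : IntermediateField ℚ Qbar) {n : ℕ}
    {Gp Hp : MvPolynomial (Fin 2) Qbar}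
    (hGL : ∀ m, MvPolynomial.coeff m Gp ∈ L) (hHL : ∀ m, MvPolynomial.coeff m Hp ∈ L)
    (hGh : Gp.IsHomogeneous n) (hHh : Hp.IsHomogeneous n)
    {x : P1} (hx : IsLpt L x) : IsLpt L (applyF Gp Hp x) := by
  obtain ⟨v, hvL, hv0, rfl⟩ := hx
  unfold applyF
  split_ifs with h
  · set p := Projectivization.mk Qbar v hv0 with hp
    obtain ⟨t, ht⟩ := (Projectivization.mk_eq_mk_iff Qbar p.rep v p.rep_nonzero hv0).mp
      (Projectivization.mk_rep p)
    set w : Fin 2 → Qbar := ![MvPolynomial.eval v Gp, MvPolynomial.eval v Hp] with hw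
    have hpair : (![MvPolynomial.eval p.rep Gp, MvPolynomial.eval p.rep Hp] :
        Fin 2 → Qbar) = ((t : Qbar) ^ n) • w := by
      funext i
      fin_cases i <;>
        simp [hw, ← ht, eval_smul_homog hGh, eval_smul_homog hHh, Units.smul_def]
    have hw0 : w ≠ 0 := by
      intro h0
      apply h
      rw [hpair, h0, smul_zero]
    refine ⟨w, ?_, hw0, ?_⟩
    · intro i
      fin_cases i <;>
        exact MvPolynomial.eval_mem (by intro j _; first | exact hGL j | exact hHL j) hvL
    · rw [(Projectivization.mk_eq_mk_iff Qbar _ w h hw0)]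
      exact ⟨(t ^ n : (Qbar)ˣ), by rw [hpair]; norm_cast⟩
  · exact ⟨v, hvL, hv0, rfl⟩

lemma vec_ne_zero_of_snd_one (α : Qbar) : (![α, 1] : Fin 2 → Qbar) ≠ 0 := by
  intro h
  have := congrFun h 1
  simp at this

lemma projHeight_mk_ratio (α : Qbar) :
    projHeight (Projectivization.mk Qbar ![α, 1] (vec_ne_zero_of_snd_one α)) = weilHeight α := by
  set p := Projectivization.mk Qbar ![α, 1] (vec_ne_zero_of_snd_one α) with hp
  obtain ⟨t, ht⟩ := (Projectivization.mk_eq_mk_iff Qbar p.rep _ p.rep_nonzero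
    (vec_ne_zero_of_snd_one α)).mp (Projectivization.mk_rep p)
  have h0 : p.rep 0 = (t : Qbar) * α := by rw [← ht]; simp [Units.smul_def]
  have h1 : p.rep 1 = (t : Qbar) := by rw [← ht]; simp [Units.smul_def]
  have ht0 : (t : Qbar) ≠ 0 := Units.ne_zero t
  unfold projHeight pairHeight
  rw [h0, h1, if_neg ht0, mul_div_assoc]
  congr 1
  field_simp


lemma vec10_ne_zero : (![1, 0] : Fin 2 → Qbar) ≠ 0 := by
  intro h
  have := congrFun h 0
  simp at this

lemma minpoly_natDegree_le_of_mem (L : IntermediateField ℚ Qbar) [FiniteDimensional ℚ L]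
    {α : Qbar} (hα : α ∈ L) : (minpoly ℚ α).natDegree ≤ Module.finrank ℚ L := by
  have h1 : minpoly ℚ α = minpoly ℚ (⟨α, hα⟩ : L) := by
    have := minpoly.algebraMap_eq (algebraMap L Qbar).injective (⟨α, hα⟩ : L) (A := ℚ)
    simpa using this
  rw [h1]
  exact minpoly.natDegree_le _

lemma Lpt_finite (L : IntermediateField ℚ Qbar) [FiniteDimensional ℚ L] (B : ℝ) :
    {p : P1 | IsLpt L p ∧ projHeight p ≤ B}.Finite := by
  classical
  have hn := northcott (Module.finrank ℚ L) B
  apply Set.Finite.subset (Set.Finite.union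
    (Set.finite_singleton (Projectivization.mk Qbar ![1,0] vec10_ne_zero))
    (hn.image (fun α => Projectivization.mk Qbar ![α,1] (vec_ne_zero_of_snd_one α))))
  rintro p ⟨⟨v, hvL, hv0, rfl⟩, hh⟩
  by_cases h1 : v 1 = 0
  · left
    have h00 : v 0 ≠ 0 := by
      intro h0
      apply hv0
      funext i
      fin_cases i
      · exact h0
      · exact h1
    refine Set.mem_singleton_iff.mpr ?_
    rw [Projectivization.mk_eq_mk_iff]
    refine ⟨Units.mk0 (v 0) h00, ?_⟩
    funext i
    fin_cases i <;> simp [Units.smul_def, h1]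
  · right
    have hmk : Projectivization.mk Qbar v hv0
        = Projectivization.mk Qbar ![v 0 / v 1, 1] (vec_ne_zero_of_snd_one _) := by
      rw [Projectivization.mk_eq_mk_iff]
      refine ⟨Units.mk0 (v 1) h1, ?_⟩
      funext i
      fin_cases i <;> simp [Units.smul_def]
      field_simp
    refine ⟨v 0 / v 1, ⟨?_, ?_⟩, hmk.symm⟩
    · exact minpoly_natDegree_le_of_mem L (div_mem (hvL 0) (hvL 1))
    · rw [← projHeight_mk_ratio, ← hmk]
      exact hh

lemma orbit_congr {s : ℕ} (G H : Fin s → MvPolynomial (Fin 2) Qbar) (seq seq' : ℕ → Fin s)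
    (x : P1) : ∀ k, (∀ j, j < k → seq' j = seq j) →
    orbitPt G H seq' x k = orbitPt G H seq x k := by
  intro k
  induction k with
  | zero => intro _; rfl
  | succ k ih =>
    intro h
    show applyF (G (seq' k)) (H (seq' k)) (orbitPt G H seq' x k)
      = applyF (G (seq k)) (H (seq k)) (orbitPt G H seq x k)
    rw [h k (Nat.lt_succ_self k), ih (fun j hj => h j (Nat.lt_succ_of_lt hj))]

end CHLB

open CHLB

/-- Uniform lower bound for canonical heights of non-preperiodic points: let
`𝒢 = ⟨f_1, …, f_s⟩` be generated by rational maps `f_i = [G i : H i]` of degrees `d i ≥ 2`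
defined over a number field `K`, with `c = c(𝒢)` bounding `|(1/d_i)h(f_i x) − h(x)|`, and
suppose each sequence `seq` obtained from `𝒢` has a canonical height `hcan seq` satisfying
`|hcan seq x − h(x)| ≤ 2c(𝒢)` and `hcan (shift seq) (f_{seq 0} x) = d_{seq 0} · hcan seq x`.
If `β` is not preperiodic for `𝒢` (every forward orbit of `β` along a sequence from `𝒢` is
infinite), then there is a constant `c₀ > 0` with `hcan seq β ≥ c₀` for every sequence. -/
theorem canonical_height_lower_bound (K : IntermediateField ℚ (AlgebraicClosure ℚ))
    [FiniteDimensional ℚ K] (s : ℕ) (d : Fin s → ℕ) (hd : ∀ i, 2 ≤ d i)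
    (G H : Fin s → MvPolynomial (Fin 2) (AlgebraicClosure ℚ))
    (hGK : ∀ i m, MvPolynomial.coeff m (G i) ∈ K)
    (hHK : ∀ i m, MvPolynomial.coeff m (H i) ∈ K)
    (hG : ∀ i, (G i).IsHomogeneous (d i)) (hH : ∀ i, (H i).IsHomogeneous (d i))
    (hcop : ∀ i (p : MvPolynomial (Fin 2) (AlgebraicClosure ℚ)),
      p ∣ G i → p ∣ H i → IsUnit p)
    (c : ℝ)
    (hc : ∀ i (x : P1), |((d i : ℝ))⁻¹ * projHeight (applyF (G i) (H i) x) - projHeight x| ≤ c)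
    (hcan : (ℕ → Fin s) → P1 → ℝ)
    (hcanA : ∀ (seq : ℕ → Fin s) (x : P1), |hcan seq x - projHeight x| ≤ 2 * c)
    (hcanB : ∀ (seq : ℕ → Fin s) (x : P1),
      hcan (fun n => seq (n + 1)) (applyF (G (seq 0)) (H (seq 0)) x)
        = (d (seq 0) : ℝ) * hcan seq x)
    (β : P1) (hβ : ∀ seq : ℕ → Fin s, (Set.range (orbitPt G H seq β)).Infinite) :
    ∃ c₀ : ℝ, 0 < c₀ ∧ ∀ seq : ℕ → Fin s, c₀ ≤ hcan seq β := by
  classical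
  rcases Nat.eq_zero_or_pos s with hs | hs
  · subst hs
    exact ⟨1, one_pos, fun seq => (seq 0).elim0⟩
  set r : Qbar := if β.rep 1 = 0 then 0 else β.rep 0 / β.rep 1 with hr
  set L : IntermediateField ℚ Qbar := K ⊔ IntermediateField.adjoin ℚ {r} with hL
  haveI : FiniteDimensional ℚ (IntermediateField.adjoin ℚ {r} : IntermediateField ℚ Qbar) :=
    IntermediateField.adjoin.finiteDimensional (((AlgebraicClosure.isAlgebraic ℚ).isAlgebraic r).isIntegral)
  haveI : FiniteDimensional ℚ L := IntermediateField.finiteDimensional_sup _ _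
  have hKL : ∀ x ∈ K, x ∈ L := fun x hx => (le_sup_left : K ≤ L) hx
  have hrL : r ∈ L := (le_sup_right : _ ≤ L) (IntermediateField.mem_adjoin_simple_self ℚ r)
  have hβL : IsLpt L β := by
    by_cases h1 : β.rep 1 = 0
    · have h0 : β.rep 0 ≠ 0 := by
        intro h0
        apply β.rep_nonzero
        funext i
        fin_cases i
        · exact h0
        · exact h1
      refine ⟨![1, 0], ?_, vec10_ne_zero, ?_⟩
      · intro i
        fin_cases i
        · exact one_mem L
        · exact zero_mem L
      · conv_lhs => rw [← Projectivization.mk_rep β]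
        rw [Projectivization.mk_eq_mk_iff]
        refine ⟨Units.mk0 (β.rep 0) h0, ?_⟩
        funext i
        fin_cases i <;> simp [Units.smul_def, h1]
    · refine ⟨![r, 1], ?_, vec_ne_zero_of_snd_one r, ?_⟩
      · intro i
        fin_cases i
        · exact hrL
        · exact one_mem L
      · conv_lhs => rw [← Projectivization.mk_rep β]
        rw [Projectivization.mk_eq_mk_iff]
        refine ⟨Units.mk0 (β.rep 1) h1, ?_⟩
        funext i
        fin_cases i
        · simp [Units.smul_def, hr, if_neg h1]
          field_simp
        · simp [Units.smul_def]
  set Fpts := {p : P1 | IsLpt L p ∧ projHeight p ≤ 2 * c + 1} with hF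
  have hFfin : Fpts.Finite := Lpt_finite L _
  set N := hFfin.toFinset.card with hN
  set dm := Finset.univ.sup d with hdm
  have hdm2 : 2 ≤ dm := le_trans (hd ⟨0, hs⟩) (Finset.le_sup (Finset.mem_univ _))
  have hdmr : (1:ℝ) ≤ (dm:ℝ) := by exact_mod_cast le_trans one_le_two hdm2
  refine ⟨1 / (dm:ℝ) ^ (N + 1), by positivity, ?_⟩
  intro seq
  by_contra hcon
  push_neg at hcon
  have horbL : ∀ n, IsLpt L (orbitPt G H seq β n) := by
    intro n
    induction n with
    | zero => exact hβL
    | succ n ih =>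
      show IsLpt L (applyF (G (seq n)) (H (seq n)) (orbitPt G H seq β n))
      exact applyF_isLpt L (fun m => hKL _ (hGK _ m)) (fun m => hKL _ (hHK _ m)) (hG _) (hH _) ih
  have hprod : ∀ n, hcan (fun m => seq (m + n)) (orbitPt G H seq β n)
      = (∏ k ∈ Finset.range n, (d (seq k) : ℝ)) * hcan seq β := by
    intro n
    induction n with
    | zero =>
      simp only [Finset.range_zero, Finset.prod_empty, one_mul]
      rfl
    | succ n ih =>
      have hstep := hcanB (fun m => seq (m + n)) (orbitPt G H seq β n)
      simp only [Nat.zero_add] at hstep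
      have e1 : (fun m => seq (m + 1 + n)) = (fun m => seq (m + (n + 1))) := by
        funext m
        congr 1
        omega
      rw [e1] at hstep
      show hcan (fun m => seq (m + (n + 1)))
        (applyF (G (seq n)) (H (seq n)) (orbitPt G H seq β n)) = _
      rw [hstep, ih, Finset.prod_range_succ]
      ring
  have hle1 : ∀ n, n ≤ N → hcan (fun m => seq (m + n)) (orbitPt G H seq β n) ≤ 1 := by
    intro n hn
    rw [hprod]
    set P := ∏ k ∈ Finset.range n, (d (seq k) : ℝ) with hP
    have hP0 : 0 ≤ P := Finset.prod_nonneg (fun k _ => by positivity)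
    have hPle : P ≤ (dm:ℝ) ^ (N + 1) := by
      calc P ≤ ∏ _k ∈ Finset.range n, (dm:ℝ) := by
            apply Finset.prod_le_prod (fun k _ => by positivity)
            intro k _
            exact_mod_cast Finset.le_sup (Finset.mem_univ (seq k))
        _ = (dm:ℝ) ^ n := by rw [Finset.prod_const, Finset.card_range]
        _ ≤ (dm:ℝ) ^ (N + 1) := pow_le_pow_right₀ hdmr (by omega)
    rcases le_or_gt (hcan seq β) 0 with h0 | h0
    · nlinarith
    · calc P * hcan seq β ≤ (dm:ℝ) ^ (N + 1) * hcan seq β :=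
          mul_le_mul_of_nonneg_right hPle (le_of_lt h0)
        _ ≤ (dm:ℝ) ^ (N + 1) * (1 / (dm:ℝ) ^ (N + 1)) :=
          mul_le_mul_of_nonneg_left (le_of_lt hcon) (by positivity)
        _ = 1 := by field_simp
  have hmemF : ∀ n, n ≤ N → orbitPt G H seq β n ∈ hFfin.toFinset := by
    intro n hn
    rw [Set.Finite.mem_toFinset]
    refine ⟨horbL n, ?_⟩
    have hA := abs_le.mp (hcanA (fun m => seq (m + n)) (orbitPt G H seq β n))
    linarith [hle1 n hn]
  have main : ∀ a b : ℕ, a < b → b ≤ N →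
      orbitPt G H seq β a = orbitPt G H seq β b → False := by
    intro a b hlt hbN heq
    set T := b - a with hT
    have hT0 : 0 < T := by omega
    set seq' : ℕ → Fin s := fun k => if k < a then seq k else seq (a + (k - a) % T) with hseq'
    have hagree : ∀ j, j < b → seq' j = seq j := by
      intro j hj
      rw [hseq']
      by_cases h : j < a
      · simp [h]
      · simp only [if_neg h]
        congr 1
        have hmod : (j - a) % T = j - a := Nat.mod_eq_of_lt (by omega)
        omega
    have horbeq : ∀ k, k ≤ b → orbitPt G H seq' β k = orbitPt G H seq β k := by
      intro k hk
      exact orbit_congr G H seq seq' β k (fun j hj => hagree j (lt_of_lt_of_le hj hk))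
    have hper_seq : ∀ k, a ≤ k → seq' (k + T) = seq' k := by
      intro k hk
      rw [hseq']
      simp only [if_neg (by omega : ¬ k + T < a), if_neg (by omega : ¬ k < a)]
      congr 1
      have e : k + T - a = (k - a) + T := by omega
      rw [e, Nat.add_mod_right]
    have hper : ∀ k, a ≤ k → orbitPt G H seq' β (k + T) = orbitPt G H seq' β k := by
      intro k hk
      induction k, hk using Nat.le_induction with
      | base =>
        have hab' : a + T = b := by omega
        rw [hab', horbeq b le_rfl, horbeq a (le_of_lt hlt), ← heq]
      | succ k hk ih =>
        have e : k + 1 + T = (k + T) + 1 := by omega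
        rw [e]
        show applyF (G (seq' (k + T))) (H (seq' (k + T))) (orbitPt G H seq' β (k + T))
          = applyF (G (seq' k)) (H (seq' k)) (orbitPt G H seq' β k)
        rw [hper_seq k hk, ih]
    have hbound : ∀ k, ∃ j, j ≤ b ∧ orbitPt G H seq' β k = orbitPt G H seq' β j := by
      intro k
      induction k using Nat.strong_induction_on with
      | _ k ih =>
        by_cases hk : k ≤ b
        · exact ⟨k, hk, rfl⟩
        · push_neg at hk
          have h1 : a ≤ k - T := by omega
          have h2 : k - T + T = k := by omega
          obtain ⟨j, hj, hje⟩ := ih (k - T) (by omega)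
          exact ⟨j, hj, by rw [← h2, hper _ h1, hje]⟩
    apply hβ seq'
    apply Set.Finite.subset (Set.Finite.image (orbitPt G H seq' β) (Set.finite_Iic b))
    rintro p ⟨k, rfl⟩
    obtain ⟨j, hj, hje⟩ := hbound k
    exact ⟨j, hj, hje.symm⟩
  obtain ⟨a, ha, b, hb, hab, heq⟩ := Finset.exists_ne_map_eq_of_card_lt_of_maps_to
    (s := Finset.range (N + 1)) (t := hFfin.toFinset)
    (by rw [Finset.card_range]; omega)
    (fun n hn => hmemF n (Nat.lt_succ_iff.mp (Finset.mem_range.mp hn)))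
  have haN : a ≤ N := Nat.lt_succ_iff.mp (Finset.mem_range.mp ha)
  have hbN : b ≤ N := Nat.lt_succ_iff.mp (Finset.mem_range.mp hb)
  rcases lt_or_gt_of_ne hab with h | h
  · exact main a b h hbN heq
  · exact main b a h haN heq.symm
end

section
/- Let 𝒢 = ⟨f_1, …, f_s⟩ be a semigroup generated by monomial maps f_i(z) = a_i z^{d_i} with a_i ∈ K∖{0} and |d_i| ≥ 2, over a number field K. Let v be any place of K and set r = min_{1≤i≤s} min(|a_i|_v^{1/(|d_i|−1)}, |a_i|_v^{−1/(|d_i|−1)}) ≤ 1. If α ∈ K̄∖{0} is preperiodic for 𝒢 (i.e., f_{i_n}∘⋯∘f_{i_1}(α) = f_{i_m}∘⋯∘f_{i_1}(α) for some n > m ≥ 0 and indices i_j), then r ≤ |α|_v ≤ 1/r. -/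
/-- Application of the word `f_{i_1 ⋯ i_n} = f_{i_n} ∘ ⋯ ∘ f_{i_1}` of the monomial
semigroup generated by `f_i(z) = a_i z^{d_i}` to a point `z`. -/
def monomialWord {F : Type*} [Field F] {s : ℕ} (a : Fin s → F) (d : Fin s → ℤ)
    (l : List (Fin s)) (z : F) : F :=
  l.foldl (fun w i => a i * w ^ d i) z

/-- A point `α` is preperiodic for the monomial semigroup `⟨f_1, …, f_s⟩` if some word
agrees with one of its proper prefixes at `α`. -/
def MonomialPreperiodic {F : Type*} [Field F] {s : ℕ} (a : Fin s → F) (d : Fin s → ℤ)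
    (α : F) : Prop :=
  ∃ l : List (Fin s), ∃ m : ℕ, m < l.length ∧
    monomialWord a d l α = monomialWord a d (l.take m) α

/-- The quantity `r = min_i min(|a_i|_v^{1/(|d_i|−1)}, |a_i|_v^{−1/(|d_i|−1)})`. -/
noncomputable def rOfG {F : Type*} [Field F] {s : ℕ} (hs : 0 < s)
    (v : AbsoluteValue F ℝ) (a : Fin s → F) (d : Fin s → ℤ) : ℝ :=
  Finset.univ.inf' (Finset.univ_nonempty_iff.mpr (Fin.pos_iff_nonempty.mp hs)) fun i =>
    min (v (a i) ^ (1 / (((d i).natAbs : ℝ) - 1)))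
        (v (a i) ^ (-(1 / (((d i).natAbs : ℝ) - 1))))

private lemma monomial_step_bound {F : Type*} [Field F] (v : AbsoluteValue F ℝ)
    {z : F} (hz : z ≠ 0) {c : F} (hc : c ≠ 0) {e : ℤ} {D : ℝ}
    (hD : 2 ≤ D) (hDe : |(e : ℝ)| = D) {R : ℝ}
    (hcb : |Real.log (v c)| ≤ (D - 1) * R)
    (hzb : R < |Real.log (v z)|) :
    |Real.log (v z)| < |Real.log (v (c * z ^ e))| := by
  have hvz : (0 : ℝ) < v z := v.pos hz
  have hvc : (0 : ℝ) < v c := v.pos hc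
  have hzpow : v (z ^ e) = v z ^ e := map_zpow₀ v z e
  have hne : v (z ^ e) ≠ 0 := by rw [hzpow]; exact zpow_ne_zero _ hvz.ne'
  have hlog : Real.log (v (c * z ^ e)) = Real.log (v c) + (e : ℝ) * Real.log (v z) := by
    rw [v.map_mul, Real.log_mul hvc.ne' hne, hzpow, Real.log_zpow]
  set x := Real.log (v z)
  set A := Real.log (v c)
  have h1 : |(e : ℝ) * x| - |A| ≤ |A + (e : ℝ) * x| := by
    have := abs_sub_abs_le_abs_sub ((e : ℝ) * x) (-A)
    simp only [sub_neg_eq_add, abs_neg] at this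
    calc |(e : ℝ) * x| - |A| ≤ |(e : ℝ) * x + A| := this
      _ = |A + (e : ℝ) * x| := by ring_nf
  have h2 : |(e : ℝ) * x| = D * |x| := by rw [abs_mul, hDe]
  rw [hlog]
  have hx : R < |x| := hzb
  nlinarith [hcb, hx, hD, h1, h2, abs_nonneg x]

private lemma monomial_word_escape {F : Type*} [Field F] (v : AbsoluteValue F ℝ) {s : ℕ}
    (a : Fin s → F) (ha : ∀ i, a i ≠ 0) (d : Fin s → ℤ) {R : ℝ}
    (hbound : ∀ i, |Real.log (v (a i))| ≤ (((d i).natAbs : ℝ) - 1) * R)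
    (hD : ∀ i, (2 : ℝ) ≤ ((d i).natAbs : ℝ)) :
    ∀ (l : List (Fin s)) (z : F), z ≠ 0 → R < |Real.log (v z)| →
      monomialWord a d l z ≠ 0 ∧ R < |Real.log (v (monomialWord a d l z))| ∧
      (l ≠ [] → |Real.log (v z)| < |Real.log (v (monomialWord a d l z))|) := by
  intro l
  induction l with
  | nil =>
    intro z hz hzb
    exact ⟨hz, hzb, fun h => absurd rfl h⟩
  | cons i t ih =>
    intro z hz hzb
    have hz' : a i * z ^ d i ≠ 0 := mul_ne_zero (ha i) (zpow_ne_zero _ hz)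
    have hDe : |((d i : ℤ) : ℝ)| = ((d i).natAbs : ℝ) := by
      rw [← Int.cast_abs, Int.abs_eq_natAbs, Int.cast_natCast]
    have hstep : |Real.log (v z)| < |Real.log (v (a i * z ^ d i))| :=
      monomial_step_bound v hz (ha i) (hD i) hDe (hbound i) hzb
    have hzb' : R < |Real.log (v (a i * z ^ d i))| := hzb.trans hstep
    obtain ⟨h0, h1, h3⟩ := ih (a i * z ^ d i) hz' hzb'
    have heq : monomialWord a d (i :: t) z = monomialWord a d t (a i * z ^ d i) := rfl
    rw [heq]
    refine ⟨h0, h1, fun _ => ?_⟩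
    rcases eq_or_ne t [] with rfl | ht
    · simpa [monomialWord] using hstep
    · exact hstep.trans (h3 ht)

/-- If `α ≠ 0` is preperiodic for the monomial semigroup `⟨a_i z^{d_i}⟩` (`a_i ≠ 0`,
`|d_i| ≥ 2`) then at every place `v`, `r ≤ |α|_v ≤ 1/r`. -/
theorem monomial_preperiodic_size_bounds (F : Type*) [Field F]
    (v : AbsoluteValue F ℝ) (s : ℕ) (hs : 0 < s)
    (a : Fin s → F) (ha : ∀ i, a i ≠ 0) (d : Fin s → ℤ) (hd : ∀ i, 2 ≤ |d i|)
    (α : F) (hα : α ≠ 0) (hpre : MonomialPreperiodic a d α) :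
    rOfG hs v a d ≤ v α ∧ v α ≤ 1 / rOfG hs v a d := by
  set r := rOfG hs v a d with hrdef
  have hrpos : 0 < r := by
    rw [hrdef, rOfG, Finset.lt_inf'_iff]
    intro i _
    exact lt_min (Real.rpow_pos_of_pos (v.pos (ha i)) _)
      (Real.rpow_pos_of_pos (v.pos (ha i)) _)
  set R := -Real.log r with hRdef
  have hD : ∀ i, (2 : ℝ) ≤ ((d i).natAbs : ℝ) := by
    intro i
    have h := hd i
    rw [Int.abs_eq_natAbs] at h
    exact_mod_cast h
  have hbound : ∀ i, |Real.log (v (a i))| ≤ (((d i).natAbs : ℝ) - 1) * R := by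
    intro i
    set D := ((d i).natAbs : ℝ) with hDdef
    have hD1 : (0 : ℝ) < D - 1 := by have := hD i; linarith
    have hmin : r ≤ min (v (a i) ^ (1 / (D - 1))) (v (a i) ^ (-(1 / (D - 1)))) := by
      rw [hrdef, rOfG]
      exact Finset.inf'_le _ (Finset.mem_univ i)
    have hvapos : (0 : ℝ) < v (a i) := v.pos (ha i)
    set A := Real.log (v (a i)) with hAdef
    have e1 : Real.log r ≤ (1 / (D - 1)) * A := by
      have := Real.log_le_log hrpos (hmin.trans (min_le_left _ _))
      rwa [Real.log_rpow hvapos] at this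
    have e2 : Real.log r ≤ -(1 / (D - 1)) * A := by
      have := Real.log_le_log hrpos (hmin.trans (min_le_right _ _))
      rwa [Real.log_rpow hvapos] at this
    have key : (D - 1) * (1 / (D - 1)) = 1 := by field_simp
    rw [abs_le]
    constructor
    · have h1' : (D - 1) * Real.log r ≤ A := by
        have := mul_le_mul_of_nonneg_left e1 hD1.le
        rwa [← mul_assoc, key, one_mul] at this
      rw [hRdef]
      linarith [h1']
    · have h2' : (D - 1) * Real.log r ≤ -A := by
        have := mul_le_mul_of_nonneg_left e2 hD1.le
        rwa [neg_mul, mul_neg, ← mul_assoc, key, one_mul] at this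
      rw [hRdef]
      linarith [h2']
  by_cases hcase : R < |Real.log (v α)|
  · exfalso
    obtain ⟨l, m, hm, heq⟩ := hpre
    have hsplit : monomialWord a d l α
        = monomialWord a d (l.drop m) (monomialWord a d (l.take m) α) := by
      conv_lhs => rw [show l = l.take m ++ l.drop m from (List.take_append_drop m l).symm]
      simp only [monomialWord, List.foldl_append]
    obtain ⟨hβ0, hβR, -⟩ :=
      monomial_word_escape v a ha d hbound hD (l.take m) α hα hcase
    set β := monomialWord a d (l.take m) α with hβdef
    obtain ⟨-, -, hstrict⟩ := monomial_word_escape v a ha d hbound hD (l.drop m) β hβ0 hβR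
    have hne : l.drop m ≠ [] := by
      intro h
      rw [List.drop_eq_nil_iff] at h
      omega
    have := hstrict hne
    rw [← hsplit, heq] at this
    exact lt_irrefl _ this
  · push_neg at hcase
    rw [abs_le] at hcase
    obtain ⟨h1, h2⟩ := hcase
    have hv : 0 < v α := v.pos hα
    constructor
    · have hlog : Real.log r ≤ Real.log (v α) := by rw [hRdef] at h1; linarith
      exact (Real.log_le_log_iff hrpos hv).mp hlog
    · have hlog : Real.log (v α) ≤ Real.log (1 / r) := by
        rw [Real.log_div one_ne_zero hrpos.ne', Real.log_one]
        rw [hRdef] at h2; linarith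
      exact (Real.log_le_log_iff hv (by positivity)).mp hlog
end

section
/- Let v be a non-archimedean place of a number field K over the rational prime p, and let 0 < ε < 1. Let α, β ∈ K̄_v with |α|_v = |β|_v ≠ 0. Then the number of roots of unity ζ ∈ K̄_v satisfying |ζα − β|_v < ε|β|_v is finite, and is bounded by a quantity depending only on K, v, and ε (not on α, β). -/
section Aux
variable {L : Type*} [Field L] (v : AbsoluteValue L ℝ)

private lemma nonarch_sum' (hna : IsNonarchimedean (v : L → ℝ)) {ι : Type*} (s : Finset ι)
    (g : ι → L) (t : ℝ) (ht : 0 ≤ t) (h : ∀ i ∈ s, v (g i) ≤ t) :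
    v (∑ i ∈ s, g i) ≤ t := by
  classical
  induction s using Finset.induction_on with
  | empty => simpa using ht
  | @insert a s' hx ih =>
    rw [Finset.sum_insert hx]
    exact le_trans (hna _ _) (max_le (h a (by simp)) (ih fun i hi => h i (by simp [hi])))

private lemma abs_natCast_le_one' (hna : IsNonarchimedean (v : L → ℝ)) (n : ℕ) :
    v (n : L) ≤ 1 := by
  induction n with
  | zero => simp
  | succ m ih =>
    push_cast
    exact le_trans (hna _ _) (max_le ih (by simp))

private lemma abs_intCast_le_one' (hna : IsNonarchimedean (v : L → ℝ)) (n : ℤ) :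
    v (n : L) ≤ 1 := by
  rcases Int.natAbs_eq n with h | h
  · rw [h, Int.cast_natCast]; exact abs_natCast_le_one' v hna _
  · rw [h, Int.cast_neg, Int.cast_natCast, v.map_neg]; exact abs_natCast_le_one' v hna _

private lemma abs_rootOfUnity' (ζ : L) (n : ℕ) (hn : 0 < n) (h : ζ ^ n = 1) : v ζ = 1 := by
  have h1 : (v ζ) ^ n = 1 := by rw [← v.map_pow, h, v.map_one]
  rcases lt_trichotomy (v ζ) 1 with hlt | he | hgt
  · exact absurd h1 (by have := pow_lt_one₀ (v.nonneg ζ) hlt hn.ne'; linarith)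
  · exact he
  · exact absurd h1 (by have := one_lt_pow₀ hgt hn.ne'; linarith)

private lemma abs_one_sub_pow_le' (hna : IsNonarchimedean (v : L → ℝ)) (ζ : L) (hζ : v ζ ≤ 1)
    (r : ℕ) : v (1 - ζ ^ r) ≤ v (1 - ζ) := by
  have key : 1 - ζ ^ r = (∑ i ∈ Finset.range r, ζ ^ i) * (1 - ζ) := by
    linear_combination geom_sum_mul ζ r
  rw [key, v.map_mul]
  calc v (∑ i ∈ Finset.range r, ζ ^ i) * v (1 - ζ)
      ≤ 1 * v (1 - ζ) := by
        refine mul_le_mul_of_nonneg_right ?_ (v.nonneg _)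
        exact nonarch_sum' v hna _ _ _ zero_le_one
          (fun i _ => by rw [v.map_pow]; exact pow_le_one₀ (v.nonneg _) hζ)
    _ = v (1 - ζ) := one_mul _

private lemma abs_coprime_eq_one' (hna : IsNonarchimedean (v : L → ℝ)) {p : ℕ} (hp : p.Prime)
    (hvp : v (p : L) < 1) (q : ℕ) (hq : ¬ p ∣ q) : v (q : L) = 1 := by
  have hco : IsCoprime (q : ℤ) (p : ℤ) :=
    Nat.isCoprime_iff_coprime.mpr (Nat.coprime_comm.mp (hp.coprime_iff_not_dvd.mpr hq))
  obtain ⟨a, b, hab⟩ := hco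
  have hle : v (q : L) ≤ 1 := abs_natCast_le_one' v hna q
  rcases eq_or_lt_of_le hle with h | h
  · exact h
  exfalso
  have h1 : (1 : L) = (a : L) * (q : L) + (b : L) * (p : L) := by
    have := congrArg (fun x : ℤ => (x : L)) hab
    push_cast at this
    exact this.symm
  have h2 : (1:ℝ) = v ((a : L) * (q : L) + (b : L) * (p : L)) := by rw [← h1, v.map_one]
  have h3 : v ((a : L) * (q : L) + (b : L) * (p : L)) ≤
      max (v (a : L) * v (q : L)) (v (b : L) * v (p : L)) := by
    simpa [v.map_mul] using hna ((a : L) * (q : L)) ((b : L) * (p : L))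
  have ha := abs_intCast_le_one' v hna a
  have hb := abs_intCast_le_one' v hna b
  have h4 : v (a : L) * v (q : L) ≤ v (q : L) :=
    mul_le_of_le_one_left (v.nonneg _) ha
  have h5 : v (b : L) * v (p : L) ≤ v (p : L) :=
    mul_le_of_le_one_left (v.nonneg _) hb
  have h6 : max (v (a : L) * v (q : L)) (v (b : L) * v (p : L)) < 1 :=
    max_lt (h4.trans_lt h) (h5.trans_lt hvp)
  linarith [h2.le.trans h3]

/-- `v m ≤ v (1 - x)` for `x` a nontrivial `m`-th root of unity. -/
private lemma abs_natCast_le_abs_one_sub' (hna : IsNonarchimedean (v : L → ℝ)) (x : L) (m : ℕ)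
    (hm : m ≠ 0) (hx : x ^ m = 1) (hne : x ≠ 1) :
    v (m : L) ≤ v (1 - x) := by
  have habs : v x ≤ 1 :=
    (abs_rootOfUnity' v x m (Nat.pos_of_ne_zero hm) hx).le
  have hS : (∑ i ∈ Finset.range m, x ^ i) = 0 := by
    have h := geom_sum_mul x m
    rw [hx, sub_self] at h
    exact (mul_eq_zero.mp h).resolve_right (sub_ne_zero_of_ne hne)
  have hm' : (m : L) = ∑ i ∈ Finset.range m, (1 - x ^ i) := by
    rw [Finset.sum_sub_distrib, hS, sub_zero, Finset.sum_const, Finset.card_range,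
      nsmul_eq_mul, mul_one]
  rw [hm']
  exact nonarch_sum' v hna _ _ _ (v.nonneg _)
    (fun i _ => abs_one_sub_pow_le' v hna x habs i)

/-- Roots of unity close to 1 have `p`-power order. -/
private lemma pow_pow_eq_one' (hna : IsNonarchimedean (v : L → ℝ)) {p : ℕ} (hp : p.Prime)
    (hvp : v (p : L) < 1) (ξ : L) (n : ℕ) (hn : 0 < n) (hξ : ξ ^ n = 1)
    (hclose : v (1 - ξ) < 1) : ξ ^ p ^ (n.factorization p) = 1 := by
  set k := n.factorization p with hk
  set q := n / p ^ k with hq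
  have hnq : p ^ k * q = n := Nat.ordProj_mul_ordCompl_eq_self n p
  have hq0 : q ≠ 0 := (Nat.ordCompl_pos p hn.ne').ne'
  have hqp : ¬ p ∣ q := Nat.not_dvd_ordCompl hp hn.ne'
  set η := ξ ^ p ^ k with hη
  have hηq : η ^ q = 1 := by rw [hη, ← pow_mul, hnq, hξ]
  have hξabs : v ξ ≤ 1 := (abs_rootOfUnity' v ξ n hn hξ).le
  have hclose' : v (1 - η) < 1 :=
    lt_of_le_of_lt (abs_one_sub_pow_le' v hna ξ hξabs _) hclose
  by_contra hne
  have h1 := abs_natCast_le_abs_one_sub' v hna η q hq0 hηq hne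
  rw [abs_coprime_eq_one' v hna hp hvp q hqp] at h1
  linarith

/-- Extraction of a nontrivial `p`-th root of unity at least as close to 1. -/
private lemma exists_p_root' (hna : IsNonarchimedean (v : L → ℝ)) {p : ℕ} (hp : p.Prime) :
    ∀ (k : ℕ) (x : L), x ^ p ^ k = 1 → x ≠ 1 →
      ∃ y : L, y ^ p = 1 ∧ y ≠ 1 ∧ v (1 - y) ≤ v (1 - x) := by
  intro k
  induction k with
  | zero => intro x hx hne; rw [pow_zero, pow_one] at hx; exact absurd hx hne
  | succ m ih =>
    intro x hx hne
    have hxabs : v x ≤ 1 :=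
      (abs_rootOfUnity' v x (p ^ (m + 1)) (pow_pos hp.pos _) hx).le
    by_cases hz : x ^ p = 1
    · exact ⟨x, hz, hne, le_refl _⟩
    · have hz' : (x ^ p) ^ p ^ m = 1 := by
        rw [← pow_mul, ← pow_succ']
        exact hx
      obtain ⟨y, hy1, hy2, hy3⟩ := ih (x ^ p) hz' hz
      exact ⟨y, hy1, hy2, hy3.trans (abs_one_sub_pow_le' v hna x hxabs p)⟩

/-- Key uniform bound: there is `N` (depending only on `v, p, ε`) such that every root of
unity within `ε` of `1` satisfies `ξ ^ p ^ N = 1`. -/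
private lemma exists_uniform_N' (hna : IsNonarchimedean (v : L → ℝ)) {p : ℕ} (hp : p.Prime)
    (hvp : v (p : L) < 1) {ε : ℝ} (hε0 : 0 < ε) (hε1 : ε < 1) :
    ∃ N : ℕ, ∀ ξ : L, (∃ n : ℕ, 0 < n ∧ ξ ^ n = 1) → v (1 - ξ) < ε →
      ξ ^ p ^ N = 1 := by
  rcases eq_or_lt_of_le (v.nonneg (p : L)) with hv0 | hv0
  · -- characteristic p case: `(p : L) = 0`
    refine ⟨0, fun ξ ⟨n, hn, hξn⟩ hclose => ?_⟩
    have hpL : (p : L) = 0 := v.eq_zero.mp hv0.symm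
    have hchar : CharP L p := by
      have hd : ringChar L ∣ p := (ringChar.spec L p).mp hpL
      have := (Nat.Prime.eq_one_or_self_of_dvd hp _ hd).resolve_left (CharP.ringChar_ne_one (R := L))
      exact ringChar.of_eq this
    have hk := pow_pow_eq_one' v hna hp hvp ξ n hn hξn (hclose.trans_le hε1.le)
    have : (ξ - 1) ^ p ^ (n.factorization p) = 0 := by
      haveI : Fact p.Prime := ⟨hp⟩
      rw [sub_pow_char_pow, hk, one_pow, sub_self]
    have hξ1 : ξ = 1 := by
      have := pow_eq_zero_iff (n := p ^ (n.factorization p)) ((pow_pos hp.pos _).ne') |>.mp this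
      exact sub_eq_zero.mp this
    rw [hξ1, pow_zero, pow_one]
  · -- `v p > 0`
    set M : ℝ := max (v (p : L)) ε with hM
    have hM0 : 0 < M := lt_of_lt_of_le hv0 (le_max_left _ _)
    have hM1 : M < 1 := max_lt hvp hε1
    have hMε : ε ≤ M := le_max_right _ _
    obtain ⟨N, hN⟩ := exists_pow_lt_of_lt_one hv0 hM1
    refine ⟨N, fun ξ ⟨n, hn, hξn⟩ hclose => ?_⟩
    have hξabs : v ξ ≤ 1 := (abs_rootOfUnity' v ξ n hn hξn).le
    -- iterated closeness bound
    have key : ∀ i : ℕ, v (1 - ξ ^ p ^ i) ≤ ε * M ^ i := by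
      intro i
      induction i with
      | zero => simpa using hclose.le
      | succ j ihj =>
        have hxj : v (ξ ^ p ^ j) ≤ 1 := by
          rw [v.map_pow]; exact pow_le_one₀ (v.nonneg _) hξabs
        have hMj : ε * M ^ j ≤ M := by
          calc ε * M ^ j ≤ M * 1 := by
                apply mul_le_mul hMε (pow_le_one₀ hM0.le hM1.le) (by positivity) hM0.le
            _ = M := mul_one M
        -- sum of p-th powers bound
        have hsum : v (∑ i ∈ Finset.range p, (ξ ^ p ^ j) ^ i) ≤ M := by
          have heq : (∑ i ∈ Finset.range p, (ξ ^ p ^ j) ^ i)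
              = (p : L) - ∑ i ∈ Finset.range p, (1 - (ξ ^ p ^ j) ^ i) := by
            rw [Finset.sum_sub_distrib, Finset.sum_const, Finset.card_range,
              nsmul_eq_mul, mul_one]
            ring
          rw [heq]
          have h7 : v ((p : L) - ∑ i ∈ Finset.range p, (1 - (ξ ^ p ^ j) ^ i))
              ≤ max (v (p : L)) (v (∑ i ∈ Finset.range p, (1 - (ξ ^ p ^ j) ^ i))) := by
            have h8 := hna ((p : L)) (-(∑ i ∈ Finset.range p, (1 - (ξ ^ p ^ j) ^ i)))
            rw [← sub_eq_add_neg, v.map_neg] at h8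
            exact h8
          refine h7.trans (max_le (le_max_left _ _) ?_)
          refine le_trans (nonarch_sum' v hna _ _ (v (1 - ξ ^ p ^ j)) (v.nonneg _)
            (fun i _ => abs_one_sub_pow_le' v hna _ hxj i)) ?_
          exact le_trans ihj hMj
        have hfac : 1 - ξ ^ p ^ (j + 1)
            = (∑ i ∈ Finset.range p, (ξ ^ p ^ j) ^ i) * (1 - ξ ^ p ^ j) := by
          have : ξ ^ p ^ (j + 1) = (ξ ^ p ^ j) ^ p := by rw [← pow_mul, pow_succ]
          rw [this]
          linear_combination geom_sum_mul (ξ ^ p ^ j) p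
        rw [hfac, v.map_mul, pow_succ]
        calc v (∑ i ∈ Finset.range p, (ξ ^ p ^ j) ^ i) * v (1 - ξ ^ p ^ j)
            ≤ M * (ε * M ^ j) := by
              apply mul_le_mul hsum ihj (v.nonneg _) hM0.le
          _ = ε * (M ^ j * M) := by ring
    -- conclude
    by_contra hne
    set x := ξ ^ p ^ N with hx
    have hxk : x ^ p ^ (n.factorization p) = 1 := by
      have hk := pow_pow_eq_one' v hna hp hvp ξ n hn hξn
        (lt_of_lt_of_le hclose hε1.le)
      rw [hx, ← pow_mul, mul_comm, pow_mul, hk, one_pow]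
    obtain ⟨y, hy1, hy2, hy3⟩ := exists_p_root' v hna hp _ x hxk hne
    have hvy := abs_natCast_le_abs_one_sub' v hna y p hp.ne_zero hy1 hy2
    have : v (p : L) ≤ ε * M ^ N := hvy.trans (hy3.trans (key N))
    have hlt : ε * M ^ N < M ^ N := by
      have : 0 < M ^ N := by positivity
      nlinarith
    linarith [hN]

end Aux

/-- The set of roots of unity `ζ` with `|ζα − β|_v < ε|β|_v`. -/
def nearRootsOfUnity {L : Type*} [Field L] (v : AbsoluteValue L ℝ) (ε : ℝ) (α β : L) :
    Set L :=
  {ζ : L | (∃ n : ℕ, 0 < n ∧ ζ ^ n = 1) ∧ v (ζ * α - β) < ε * v β}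

/-- Let `v` be a non-archimedean place (over the rational prime `p`, so `|p|_v < 1`) with
absolute value extended to `K̄_v`, and let `0 < ε < 1`.  Then the number of roots of unity `ζ`
with `|ζα − β|_v < ε|β|_v` is finite, bounded by a constant depending only on the valued field
and `ε` (not on `α, β` with `|α|_v = |β|_v ≠ 0`). -/
theorem card_nearRootsOfUnity_bounded (L : Type*) [Field L]
    (v : AbsoluteValue L ℝ) (hna : IsNonarchimedean (v : L → ℝ))
    (p : ℕ) (hp : p.Prime) (hvp : v (p : L) < 1)
    (ε : ℝ) (hε0 : 0 < ε) (hε1 : ε < 1) :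
    ∃ C : ℕ, ∀ α β : L, α ≠ 0 → β ≠ 0 → v α = v β →
      (nearRootsOfUnity v ε α β).Finite ∧
      Nat.card (nearRootsOfUnity v ε α β) ≤ C := by
  obtain ⟨N, hN⟩ := exists_uniform_N' v hna hp hvp hε0 hε1
  refine ⟨p ^ N, fun α β hα hβ hvab => ?_⟩
  set S := nearRootsOfUnity v ε α β with hSdef
  rcases Set.eq_empty_or_nonempty S with hemp | ⟨ζ0, hζ0⟩
  · rw [hemp]; exact ⟨Set.finite_empty, by simp⟩
  obtain ⟨⟨n0, hn0, hζ0n⟩, hζ0close⟩ := hζ0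
  have hζ0abs : v ζ0 = 1 := abs_rootOfUnity' v ζ0 n0 hn0 hζ0n
  have hζ0ne : ζ0 ≠ 0 := fun h => by simp [h] at hζ0abs
  have hζ0inv : v ζ0⁻¹ = 1 := by
    have h := v.map_mul ζ0⁻¹ ζ0
    rw [inv_mul_cancel₀ hζ0ne, v.map_one, hζ0abs, mul_one] at h
    exact h.symm
  have hvα : 0 < v α := v.pos hα
  have key : ∀ ζ ∈ S, (ζ * ζ0⁻¹) ^ p ^ N = 1 := by
    rintro ζ ⟨⟨n, hn, hζn⟩, hζclose⟩
    apply hN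
    · refine ⟨n * n0, Nat.mul_pos hn hn0, ?_⟩
      rw [mul_pow, inv_pow, pow_mul, hζn, one_pow, mul_comm n n0, pow_mul, hζ0n,
        one_pow, inv_one, mul_one]
    · have h1 : v (ζ0 - ζ) * v α < ε * v α := by
        rw [← v.map_mul]
        have heq : (ζ0 - ζ) * α = (ζ0 * α - β) - (ζ * α - β) := by ring
        rw [heq]
        have h2 := hna (ζ0 * α - β) (-(ζ * α - β))
        rw [← sub_eq_add_neg, v.map_neg] at h2
        refine h2.trans_lt (max_lt ?_ ?_)
        · rw [hvab]; exact hζ0close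
        · rw [hvab]; exact hζclose
      have h3 : v (ζ0 - ζ) < ε := lt_of_mul_lt_mul_right h1 (v.nonneg α)
      have h4 : 1 - ζ * ζ0⁻¹ = (ζ0 - ζ) * ζ0⁻¹ := by field_simp
      rw [h4, v.map_mul, hζ0inv, mul_one]
      exact h3
  -- counting
  classical
  set F : Finset L := (Polynomial.nthRoots (p ^ N) (1 : L)).toFinset.image (· * ζ0) with hF
  have hsub : S ⊆ ↑F := by
    intro ζ hζ
    have hξ := key ζ hζ
    have hζeq : ζ = (ζ * ζ0⁻¹) * ζ0 := by field_simp
    rw [hF]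
    refine Finset.mem_coe.mpr (Finset.mem_image.mpr ⟨ζ * ζ0⁻¹, ?_, hζeq.symm⟩)
    rw [Multiset.mem_toFinset, Polynomial.mem_nthRoots (pow_pos hp.pos N)]
    exact hξ
  refine ⟨Set.Finite.subset F.finite_toSet hsub, ?_⟩
  have hcard : Nat.card S ≤ F.card := by
    rw [Nat.card_coe_set_eq]
    calc S.ncard ≤ (↑F : Set L).ncard := Set.ncard_le_ncard hsub F.finite_toSet
      _ = F.card := Set.ncard_coe_finset F
  refine hcard.trans ?_
  calc F.card ≤ (Polynomial.nthRoots (p ^ N) (1 : L)).toFinset.card := Finset.card_image_le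
    _ ≤ Multiset.card (Polynomial.nthRoots (p ^ N) (1 : L)) := Multiset.toFinset_card_le _
    _ ≤ p ^ N := Polynomial.card_nthRoots _ _
end

section
/- Let 𝒢 = ⟨f_1, …, f_s⟩ be a semigroup of monomial maps f_i(z) = a_i z^{d_i} over a number field K, with a_i ≠ 0 and |d_i| ≥ 2. If α ∈ K̄∖{0} is preperiodic for 𝒢, then there exist an integer N ≥ 1 and integers k_1, …, k_s with |k_i| ≤ N such that α^N = a_1^{k_1} ⋯ a_s^{k_s}. -/
/-- Exponent vector of the coefficient of a monomial word. -/
def monExpVec {s : ℕ} (d : Fin s → ℤ) : List (Fin s) → Fin s → ℤ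
  | [], _ => 0
  | j :: l, i => monExpVec d l i + if i = j then (l.map d).prod else 0

lemma monomialWord_eq {F : Type*} [Field F] {s : ℕ} (a : Fin s → F) (d : Fin s → ℤ)
    (ha : ∀ i, a i ≠ 0) :
    ∀ (l : List (Fin s)) (z : F), z ≠ 0 →
      monomialWord a d l z = (∏ i, a i ^ monExpVec d l i) * z ^ (l.map d).prod := by
  intro l
  induction l with
  | nil => intro z hz; simp [monomialWord, monExpVec]
  | cons j l ih =>
    intro z hz
    have hz' : a j * z ^ d j ≠ 0 := mul_ne_zero (ha j) (zpow_ne_zero _ hz)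
    have h1 : monomialWord a d (j :: l) z = monomialWord a d l (a j * z ^ d j) := rfl
    rw [h1, ih _ hz']
    have h2 : (∏ i, a i ^ monExpVec d (j :: l) i)
        = (∏ i, a i ^ monExpVec d l i) * a j ^ (l.map d).prod := by
      have : ∀ i, a i ^ monExpVec d (j :: l) i
          = a i ^ monExpVec d l i * a i ^ (if i = j then (l.map d).prod else 0) := by
        intro i
        rw [show monExpVec d (j :: l) i
            = monExpVec d l i + (if i = j then (l.map d).prod else 0) from rfl,
          zpow_add₀ (ha i)]
      rw [Finset.prod_congr rfl fun i _ => this i, Finset.prod_mul_distrib]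
      congr 1
      have : ∀ i, a i ^ (if i = j then (l.map d).prod else 0)
          = if i = j then a i ^ (l.map d).prod else 1 := by
        intro i; split <;> simp
      rw [Finset.prod_congr rfl fun i _ => this i, Finset.prod_ite_eq' Finset.univ j]
      simp
    rw [h2]
    have h3 : ((j :: l).map d).prod = d j * (l.map d).prod := by simp
    rw [h3, mul_zpow, ← zpow_mul]
    ring

lemma monExpVec_abs_sum {s : ℕ} (d : Fin s → ℤ) (hd : ∀ i, 2 ≤ |d i|) :
    ∀ l : List (Fin s), ∑ i, |monExpVec d l i| ≤ |(l.map d).prod| - 1 := by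
  intro l
  induction l with
  | nil => simp [monExpVec]
  | cons j l ih =>
    have hD : (1 : ℤ) ≤ |(l.map d).prod| := by
      refine Int.one_le_abs ?_
      apply List.prod_ne_zero
      intro h0
      obtain ⟨i, _, hi⟩ := List.mem_map.mp h0
      have h2 := hd i
      rw [hi] at h2; simp at h2
    calc ∑ i, |monExpVec d (j :: l) i|
        ≤ ∑ i, (|monExpVec d l i| + |if i = j then (l.map d).prod else 0|) := by
          apply Finset.sum_le_sum
          intro i _
          exact abs_add_le _ _
      _ = (∑ i, |monExpVec d l i|) + |(l.map d).prod| := by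
          rw [Finset.sum_add_distrib]
          congr 1
          have : ∀ i, |if i = j then (l.map d).prod else 0|
              = if i = j then |(l.map d).prod| else 0 := by intro i; split <;> simp
          rw [Finset.sum_congr rfl fun i _ => this i, Finset.sum_ite_eq' Finset.univ j]
          simp
      _ ≤ (|(l.map d).prod| - 1) + |(l.map d).prod| := by linarith
      _ ≤ |((j :: l).map d).prod| - 1 := by
          have h3 : ((j :: l).map d).prod = d j * (l.map d).prod := by simp
          rw [h3, abs_mul]
          have := hd j
          nlinarith [abs_nonneg ((l.map d).prod)]

lemma monExpVec_append {s : ℕ} (d : Fin s → ℤ) :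
    ∀ (l t : List (Fin s)) (i : Fin s),
      monExpVec d (l ++ t) i = monExpVec d t i + (t.map d).prod * monExpVec d l i := by
  intro l t i
  induction l with
  | nil => simp [monExpVec]
  | cons j l ih =>
    have h1 : monExpVec d ((j :: l) ++ t) i
        = monExpVec d (l ++ t) i + if i = j then ((l ++ t).map d).prod else 0 := rfl
    have h2 : ((l ++ t).map d).prod = (l.map d).prod * (t.map d).prod := by simp
    rw [h1, ih, h2]
    have h3 : monExpVec d (j :: l) i
        = monExpVec d l i + if i = j then (l.map d).prod else 0 := rfl
    rw [h3]
    split <;> ring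

/-- If `α ≠ 0` is preperiodic for the monomial semigroup generated by `f_i(z) = a_i z^{d_i}`
(`a_i ≠ 0`, `|d_i| ≥ 2`) over a number field `K`, then `α^N = a_1^{k_1} ⋯ a_s^{k_s}` for some
`N ≥ 1` and integers `k_i` with `|k_i| ≤ N`. -/
theorem monomial_preperiodic_power_eq (K : Type*) [Field K] [NumberField K]
    (F : Type*) [Field F] [Algebra K F] (s : ℕ)
    (a : Fin s → K) (ha : ∀ i, a i ≠ 0) (d : Fin s → ℤ) (hd : ∀ i, 2 ≤ |d i|)
    (α : F) (hα : α ≠ 0)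
    (hpre : MonomialPreperiodic (fun i => algebraMap K F (a i)) d α) :
    ∃ N : ℕ, 1 ≤ N ∧ ∃ k : Fin s → ℤ, (∀ i, |k i| ≤ (N : ℤ)) ∧
      α ^ N = ∏ i, algebraMap K F (a i) ^ k i := by
  obtain ⟨l, m, hm, heq⟩ := hpre
  set A : Fin s → F := fun i => algebraMap K F (a i) with hA_def
  have hA : ∀ i, A i ≠ 0 := fun i => (map_ne_zero _).mpr (ha i)
  set l' := l.take m with hl'
  set t := l.drop m with ht_def
  have hlt : l' ++ t = l := List.take_append_drop m l
  have ht : t ≠ [] := by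
    intro h
    have : t.length = l.length - m := List.length_drop
    rw [h] at this
    simp at this
    omega
  set D' : ℤ := (l'.map d).prod with hD'
  set P : ℤ := (t.map d).prod with hP
  -- basic facts about D' and P
  have habs : ∀ u : List (Fin s), (1 : ℤ) ≤ |(u.map d).prod| := by
    intro u
    refine Int.one_le_abs ?_
    apply List.prod_ne_zero
    intro h0
    obtain ⟨i, _, hi⟩ := List.mem_map.mp h0
    have h2 := hd i
    rw [hi] at h2; simp at h2
  have hD'1 : (1 : ℤ) ≤ |D'| := habs l'
  have hP2 : (2 : ℤ) ≤ |P| := by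
    obtain ⟨j, u, htu⟩ := List.exists_cons_of_ne_nil ht
    have h1 : ((j :: u).map d).prod = d j * (u.map d).prod := by simp
    rw [hP, htu, h1, abs_mul]
    have := hd j
    nlinarith [habs u]
  -- the word equation in exponential form
  have hDl : (l.map d).prod = D' * P := by
    rw [← hlt]; simp [hD', hP]
  have hEl : ∀ i, monExpVec d l i = monExpVec d t i + P * monExpVec d l' i := by
    intro i; rw [← hlt]; exact monExpVec_append d l' t i
  rw [monomialWord_eq A d hA l α hα, monomialWord_eq A d hA l' α hα] at heq
  -- isolate the power of α
  set M : ℤ := D' * P - D' with hM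
  set k0 : Fin s → ℤ := fun i => monExpVec d l' i - monExpVec d l i with hk0
  have hαM : α ^ M = ∏ i, A i ^ k0 i := by
    have h1 : α ^ M = α ^ (D' * P) / α ^ D' := by
      rw [hM, zpow_sub₀ hα]
    have hX : (∏ i, A i ^ monExpVec d l i) ≠ 0 :=
      Finset.prod_ne_zero_iff.mpr fun i _ => zpow_ne_zero _ (hA i)
    have h2 : ∀ i, A i ^ k0 i = A i ^ monExpVec d l' i / A i ^ monExpVec d l i := by
      intro i; rw [hk0, zpow_sub₀ (hA i)]
    rw [h1, Finset.prod_congr rfl fun i _ => h2 i, Finset.prod_div_distrib]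
    rw [hDl, ← hD'] at heq
    rw [div_eq_div_iff (zpow_ne_zero _ hα) hX]
    linear_combination heq
  -- bound on the exponents
  have hsum : ∑ i, |k0 i| ≤ |M| := by
    have hk0' : ∀ i, k0 i = (1 - P) * monExpVec d l' i - monExpVec d t i := by
      intro i
      show monExpVec d l' i - monExpVec d l i = _
      rw [hEl i]; ring
    have h1 : ∑ i, |k0 i| ≤ |1 - P| * (∑ i, |monExpVec d l' i|) + ∑ i, |monExpVec d t i| := by
      rw [Finset.mul_sum, ← Finset.sum_add_distrib]
      apply Finset.sum_le_sum
      intro i _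
      rw [hk0' i]
      calc |(1 - P) * monExpVec d l' i - monExpVec d t i|
          ≤ |(1 - P) * monExpVec d l' i| + |monExpVec d t i| := abs_sub _ _
        _ = |1 - P| * |monExpVec d l' i| + |monExpVec d t i| := by rw [abs_mul]
    have h2 : ∑ i, |monExpVec d l' i| ≤ |D'| - 1 := monExpVec_abs_sum d hd l'
    have h3 : ∑ i, |monExpVec d t i| ≤ |P| - 1 := monExpVec_abs_sum d hd t
    have h4 : |P| - 1 ≤ |1 - P| := by
      rcases abs_cases P with ⟨hc, _⟩ | ⟨hc, _⟩ <;> rcases abs_cases (1 - P) with ⟨hc2, _⟩ | ⟨hc2, _⟩ <;> omega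
    have h5 : |M| = |1 - P| * |D'| := by
      rw [hM, show D' * P - D' = D' * (P - 1) by ring, abs_mul, abs_sub_comm]
      ring
    have h6 : (0 : ℤ) ≤ |1 - P| := abs_nonneg _
    have h7 : ∑ i, |monExpVec d l' i| ≥ 0 :=
      Finset.sum_nonneg fun i _ => abs_nonneg _
    nlinarith
  -- conclude
  have hM0 : M ≠ 0 := by
    rw [hM]
    have hD'0 : D' ≠ 0 := by intro h; rw [h] at hD'1; simp at hD'1
    have hP1 : P ≠ 1 := by intro h; rw [h] at hP2; simp at hP2
    intro h
    have h0 : D' * (P - 1) = 0 := by linarith [h]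
    rcases mul_eq_zero.mp h0 with h' | h'
    · exact hD'0 h'
    · exact hP1 (by linarith)
  refine ⟨M.natAbs, by omega, ?_⟩
  have hNcast : (M.natAbs : ℤ) = |M| := Int.abs_eq_natAbs M ▸ rfl
  rcases le_or_gt 0 M with hMpos | hMneg
  · refine ⟨k0, fun i => ?_, ?_⟩
    · rw [hNcast]
      have : |k0 i| ≤ ∑ j, |k0 j| :=
        Finset.single_le_sum (fun j _ => abs_nonneg (k0 j)) (Finset.mem_univ i)
      omega
    · have : (M.natAbs : ℤ) = M := by omega
      rw [← zpow_natCast α M.natAbs, this, hαM]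
  · refine ⟨fun i => -k0 i, fun i => ?_, ?_⟩
    · rw [hNcast, abs_neg]
      have : |k0 i| ≤ ∑ j, |k0 j| :=
        Finset.single_le_sum (fun j _ => abs_nonneg (k0 j)) (Finset.mem_univ i)
      omega
    · have hcast : (M.natAbs : ℤ) = -M := by omega
      rw [← zpow_natCast α M.natAbs, hcast, zpow_neg, hαM]
      rw [← Finset.prod_inv_distrib]
      exact Finset.prod_congr rfl fun i _ => (zpow_neg _ _).symm
end
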